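/- For every n ≥ 5, the matroid D_n has a unique 2-element cocircuit {x,y} (its unique series pair), and the contraction D_n/{x,y} is isomorphic to the uniform matroid U_{n−2,2n−2}. -/

import Mathlib

open Set Matroid

variable {α : Type*}

/-- `N` is a transversal presentation of the matroid `M`: the independent sets of `M` are
exactly the partial transversals of the family `N`, i.e. the subsets of the ground set
admitting an injection `φ` into the index set with `x ∈ N (φ x)` for all `x`. -/
def IsTransversalPresentation (M : Matroid α) {r : ℕ} (N : Fin r → Set α) : Prop :=
  (∀ i, N i ⊆ M.E) ∧
    ∀ I : Set α, M.Indep I ↔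
      I ⊆ M.E ∧ ∃ φ : I → Fin r, Function.Injective φ ∧ ∀ x : I, (x : α) ∈ N (φ x)

/-- A matroid is bicircular if it has a transversal presentation in which every set of the
presentation has at most two elements. -/
def Bicircular (M : Matroid α) : Prop :=
  ∃ (r : ℕ) (N : Fin r → Set α), IsTransversalPresentation M N ∧ ∀ i, (N i).encard ≤ 2

/-- `M` is a matroid on ground set `{1, …, m + r}` with a standard (lattice path)
presentation consisting of the intervals `[l i, u i]`, where the lower endpoints and the
upper endpoints each form strictly increasing chains. -/
def IsStandardPresentation (M : Matroid ℕ) (m : ℕ) {r : ℕ} (l u : Fin r → ℕ) : Prop :=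
  M.E = Set.Icc 1 (m + r) ∧ StrictMono l ∧ StrictMono u ∧
    (∀ i, 1 ≤ l i ∧ l i ≤ u i ∧ u i ≤ m + r) ∧
    IsTransversalPresentation M (fun i => Set.Icc (l i) (u i))

/-- A matroid is a lattice path matroid if it is isomorphic (via a bijection `g` of ground
sets) to a transversal matroid on `{1, …, m + r}` whose presentation consists of intervals
`[l i, u i]` with both endpoint sequences strictly increasing. -/
def LatticePath (M : Matroid α) : Prop :=
  ∃ (r m : ℕ) (g : ℕ → α) (l u : Fin r → ℕ),
    Set.InjOn g (Set.Icc 1 (m + r)) ∧ g '' Set.Icc 1 (m + r) = M.E ∧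
    StrictMono l ∧ StrictMono u ∧ (∀ i, 1 ≤ l i ∧ l i ≤ u i ∧ u i ≤ m + r) ∧
    IsTransversalPresentation M (fun i => g '' Set.Icc (l i) (u i))

/-- The class of matroids that are both bicircular and lattice path. -/
def BicircLP (M : Matroid α) : Prop := Bicircular M ∧ LatticePath M

/-- Deletion of the set `D` from the matroid `M`. -/
def MDel (M : Matroid α) (D : Set α) : Matroid α := M ↾ (M.E \ D)

/-- Contraction of the set `C` in the matroid `M`. -/
def MCon (M : Matroid α) (C : Set α) : Matroid α := (M✶ ↾ (M.E \ C))✶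

/-- `N` is a minor of `M`: it is obtained from `M` by contracting a set and deleting a set. -/
def IsMinorOf (N M : Matroid α) : Prop :=
  ∃ C D : Set α, C ⊆ M.E ∧ D ⊆ M.E ∧ Disjoint C D ∧ N = MDel (MCon M C) D

/-- `N` is a proper minor of `M`: a minor on a proper subset of the ground set. -/
def IsProperMinorOf (N M : Matroid α) : Prop := IsMinorOf N M ∧ N.E ⊂ M.E

/-- `M` is an excluded minor for the class `𝒞`: `M` is not in `𝒞`, but every proper minor
of `M` is in `𝒞`. -/
def IsExcludedMinor (𝒞 : Matroid α → Prop) (M : Matroid α) : Prop :=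
  ¬ 𝒞 M ∧ ∀ N : Matroid α, IsProperMinorOf N M → 𝒞 N

/-- The rank of the set `X` in `M`: the supremum of the cardinalities of independent
subsets of `X`. -/
noncomputable def eRk (M : Matroid α) (X : Set α) : ℕ∞ :=
  ⨆ I : {I : Set α // M.Indep I ∧ I ⊆ X}, (I : Set α).encard

/-- The rank of the matroid `M`. -/
noncomputable def eRank (M : Matroid α) : ℕ∞ := _root_.eRk M M.E

/-- `M` is vertically 3-connected: it has no vertical `k`-separation for `k < 3`, i.e. no
partition `(A, B)` of the ground set with `|A| ≥ k`, `|B| ≥ k`, `r A ≥ k`, `r B ≥ k` and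
`r A + r B - r M < k`. -/
def VerticallyThreeConnected (M : Matroid α) : Prop :=
  ∀ k : ℕ, 0 < k → k < 3 → ∀ A B : Set α, A ∪ B = M.E → Disjoint A B →
    ¬ ((k : ℕ∞) ≤ A.encard ∧ (k : ℕ∞) ≤ B.encard ∧ (k : ℕ∞) ≤ _root_.eRk M A ∧
        (k : ℕ∞) ≤ _root_.eRk M B ∧ _root_.eRk M A + _root_.eRk M B < _root_.eRank M + (k : ℕ∞))

/-- A circuit of a matroid: a minimal dependent set. -/
def IsCircuit (M : Matroid α) (C : Set α) : Prop :=
  M.Dep C ∧ ∀ D : Set α, D ⊂ C → M.Indep D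

/-- `P` is a parallel class of `M`: a maximal set of pairwise parallel non-loop elements. -/
def IsParallelClass (M : Matroid α) (P : Set α) : Prop :=
  P.Nonempty ∧ P ⊆ M.E ∧ (∀ a ∈ P, M.Indep {a}) ∧
    (∀ a ∈ P, ∀ b ∈ P, a ≠ b → ¬ M.Indep {a, b}) ∧
    ∀ c ∈ M.E, M.Indep {c} → (∀ a ∈ P, a ≠ c → ¬ M.Indep {a, c}) → c ∈ P

/-- `M` is isomorphic to the uniform matroid `U_{a,b}`: its ground set has `b` elements and
its independent sets are the subsets of the ground set with at most `a` elements. -/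
def IsUnifIso (a b : ℕ) (M : Matroid α) : Prop :=
  M.E.encard = (b : ℕ∞) ∧ ∀ I : Set α, M.Indep I ↔ I ⊆ M.E ∧ I.encard ≤ (a : ℕ∞)

/-- `M` is the direct sum of `M₁` and `M₂` (which have disjoint ground sets). -/
def IsDirectSumOf (M M₁ M₂ : Matroid α) : Prop :=
  Disjoint M₁.E M₂.E ∧ M.E = M₁.E ∪ M₂.E ∧
    ∀ I : Set α, M.Indep I ↔ I ⊆ M.E ∧ M₁.Indep (I ∩ M₁.E) ∧ M₂.Indep (I ∩ M₂.E)

/-- `M` is the truncation `T_n(M₀)` to rank `n` of the matroid `M₀` (of rank at least `n`):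
its independent sets are the independent sets of `M₀` with at most `n` elements. -/
def IsTruncationOf (n : ℕ) (M₀ M : Matroid α) : Prop :=
  (n : ℕ∞) ≤ _root_.eRank M₀ ∧ M.E = M₀.E ∧
    ∀ I : Set α, M.Indep I ↔ M₀.Indep I ∧ I.encard ≤ (n : ℕ∞)

/-- `M` is the free extension `M₀ + x` of `M₀` by the new element `x`: its independent sets
are the independent sets `I` of `M₀`, together with the sets `I ∪ {x}` for `I` independent
in `M₀` with `|I| ≤ r(M₀) - 1`. -/
def IsFreeExtOf (M₀ M : Matroid α) (x : α) : Prop :=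
  x ∉ M₀.E ∧ M.E = insert x M₀.E ∧
    ∀ I : Set α, M.Indep I ↔
      ((x ∉ I ∧ M₀.Indep I) ∨
        (x ∈ I ∧ M₀.Indep (I \ {x}) ∧ (I \ {x}).encard + 1 ≤ _root_.eRank M₀))

/-- `M` is isomorphic to `T_3(U_{1,2} ⊕ U_{3,5})`. -/
def IsT3U12U35 (M : Matroid α) : Prop :=
  ∃ M₁ M₂ M₀ : Matroid α, IsUnifIso 1 2 M₁ ∧ IsUnifIso 3 5 M₂ ∧ IsDirectSumOf M₀ M₁ M₂ ∧
    IsTruncationOf 3 M₀ M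

/-- `M` is isomorphic to `T_3(U_{1,2} ⊕ U_{1,2} ⊕ U_{3,3})`. -/
def IsT3U12U12U33 (M : Matroid α) : Prop :=
  ∃ M₁ M₂ M₃ M₁₂ M₀ : Matroid α, IsUnifIso 1 2 M₁ ∧ IsUnifIso 1 2 M₂ ∧ IsUnifIso 3 3 M₃ ∧
    IsDirectSumOf M₁₂ M₁ M₂ ∧ IsDirectSumOf M₀ M₁₂ M₃ ∧ IsTruncationOf 3 M₀ M

/-- `M` is isomorphic to `T_4(U_{1,2} ⊕ U_{4,5})`. -/
def IsT4U12U45 (M : Matroid α) : Prop :=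
  ∃ M₁ M₂ M₀ : Matroid α, IsUnifIso 1 2 M₁ ∧ IsUnifIso 4 5 M₂ ∧ IsDirectSumOf M₀ M₁ M₂ ∧
    IsTruncationOf 4 M₀ M

/-- `M` is isomorphic to `T_4(U_{3,4} ⊕ U_{3,3})`. -/
def IsT4U34U33 (M : Matroid α) : Prop :=
  ∃ M₁ M₂ M₀ : Matroid α, IsUnifIso 3 4 M₁ ∧ IsUnifIso 3 3 M₂ ∧ IsDirectSumOf M₀ M₁ M₂ ∧
    IsTruncationOf 4 M₀ M

/-- `M` is isomorphic to `P_n = T_n(U_{n-1,n} ⊕ U_{n-1,n})`. -/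
def IsP (n : ℕ) (M : Matroid α) : Prop :=
  ∃ M₁ M₂ M₀ : Matroid α, IsUnifIso (n - 1) n M₁ ∧ IsUnifIso (n - 1) n M₂ ∧
    IsDirectSumOf M₀ M₁ M₂ ∧ IsTruncationOf n M₀ M

/-- `M` is isomorphic to `P_n' = (P_{n-1}✶ + e)✶`, the free coextension of `P_{n-1}`. -/
def IsP' (n : ℕ) (M : Matroid α) : Prop :=
  ∃ (N : Matroid α) (e : α), IsP (n - 1) N ∧ IsFreeExtOf N✶ M✶ e

/-- `M` is isomorphic to `A_n = P_n' + x`. -/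
def IsA (n : ℕ) (M : Matroid α) : Prop :=
  ∃ (N : Matroid α) (x : α), IsP' n N ∧ IsFreeExtOf N M x

/-- `M` is isomorphic to `B_{n,k} = T_n(U_{n-1,n} ⊕ U_{n-1,n} ⊕ U_{k-1,k})`. -/
def IsB (n k : ℕ) (M : Matroid α) : Prop :=
  ∃ M₁ M₂ M₃ M₁₂ M₀ : Matroid α, IsUnifIso (n - 1) n M₁ ∧ IsUnifIso (n - 1) n M₂ ∧
    IsUnifIso (k - 1) k M₃ ∧ IsDirectSumOf M₁₂ M₁ M₂ ∧ IsDirectSumOf M₀ M₁₂ M₃ ∧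
    IsTruncationOf n M₀ M

/-- `M` is isomorphic to `C_{n+k,k} = B_{n,k}✶`. -/
def IsC (n k : ℕ) (M : Matroid α) : Prop := IsB n k M✶

/-- `M` is isomorphic to `D_n = (P_{n-1} ⊕ U_{1,1}) + x`. -/
def IsD (n : ℕ) (M : Matroid α) : Prop :=
  ∃ (P U S : Matroid α) (x : α), IsP (n - 1) P ∧ IsUnifIso 1 1 U ∧ IsDirectSumOf S P U ∧
    IsFreeExtOf S M x

/-- `M` is isomorphic to `E_n = D_n✶`. -/
def IsE (n : ℕ) (M : Matroid α) : Prop := IsD n M✶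

/-- `M` is isomorphic to the rank-3 whirl `𝒲³`, the transversal matroid on `{1, …, 6}` with
presentation `({1,3,4}, {1,2,5}, {2,3,6})`. -/
def IsWhirl3 (M : Matroid α) : Prop :=
  ∃ g : ℕ → α, Set.InjOn g (Set.Icc 1 6) ∧ g '' Set.Icc 1 6 = M.E ∧
    IsTransversalPresentation M ![g '' {1, 3, 4}, g '' {1, 2, 5}, g '' {2, 3, 6}]

/-- `M` is isomorphic to `R₃`, the transversal matroid on `{1, …, 7}` with presentation
`({1,2}, {1,3,4,5}, {2,3,6,7})`. -/
def IsR3 (M : Matroid α) : Prop :=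
  ∃ g : ℕ → α, Set.InjOn g (Set.Icc 1 7) ∧ g '' Set.Icc 1 7 = M.E ∧
    IsTransversalPresentation M ![g '' {1, 2}, g '' {1, 3, 4, 5}, g '' {2, 3, 6, 7}]

/-- `M` is isomorphic to `R₄`, the transversal matroid on `{1, …, 7}` with presentation
`({1,2}, {1,3,4,5}, {2,3,6,7}, {6,7})`. -/
def IsR4 (M : Matroid α) : Prop :=
  ∃ g : ℕ → α, Set.InjOn g (Set.Icc 1 7) ∧ g '' Set.Icc 1 7 = M.E ∧
    IsTransversalPresentation M
      ![g '' {1, 2}, g '' {1, 3, 4, 5}, g '' {2, 3, 6, 7}, g '' {6, 7}]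

/-- `M` is isomorphic to the rank-3 wheel `𝒲₃`, the cycle matroid of `K₄`: the elements
correspond bijectively to the edges of the complete graph on four vertices, and a set is
independent if and only if the corresponding edge set is acyclic. -/
def IsWheel3 (M : Matroid α) : Prop :=
  ∃ f : α → Sym2 (Fin 4),
    Set.InjOn f M.E ∧ (∀ x ∈ M.E, ¬ (f x).IsDiag) ∧
    (∀ p : Sym2 (Fin 4), ¬ p.IsDiag → ∃ x ∈ M.E, f x = p) ∧
    ∀ I : Set α, M.Indep I ↔ I ⊆ M.E ∧ (SimpleGraph.fromEdgeSet (f '' I)).IsAcyclic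

private lemma enat_ge {a b : ℕ∞} {k j : ℕ} (h : a + b = (k : ℕ∞)) (hb : b ≤ (j : ℕ∞))
    (hjk : j ≤ k) : ((k - j : ℕ) : ℕ∞) ≤ a := by
  rw [← ENat.add_le_add_iff_right (show (j : ℕ∞) ≠ ⊤ by simp)]
  calc ((k - j : ℕ) : ℕ∞) + (j : ℕ∞) = ((k - j + j : ℕ) : ℕ∞) := by push_cast; ring
    _ = (k : ℕ∞) := by rw [Nat.sub_add_cancel hjk]
    _ = a + b := h.symm
    _ ≤ a + (j : ℕ∞) := add_le_add_right hb a

private lemma encard_inter_union_eq {α : Type*} {A B : Set α} (I : Set α) (hd : Disjoint A B) :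
    (I ∩ A).encard + (I ∩ B).encard = (I ∩ (A ∪ B)).encard := by
  rw [Set.inter_union_distrib_left]
  exact (Set.encard_union_eq (hd.mono inter_subset_right inter_subset_right)).symm

private lemma encard_cancel {α : Type*} {A B' : Set α} {k j : ℕ} (hjk : j ≤ k) (hsub : B' ⊆ A)
    (hA : A.encard = (k : ℕ∞)) (hB' : B'.encard = (j : ℕ∞)) :
    (A \ B').encard = ((k - j : ℕ) : ℕ∞) := by
  have h := Set.encard_diff_add_encard_inter A B'
  rw [Set.inter_eq_self_of_subset_right hsub, hB', hA] at h
  have h2 : (A \ B').encard + (j : ℕ∞) = ((k - j : ℕ) : ℕ∞) + (j : ℕ∞) := by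
    rw [h, ← Nat.cast_add, Nat.sub_add_cancel hjk]
  exact WithTop.add_right_cancel (show (j : ℕ∞) ≠ ⊤ by simp) h2

/-- For every `n ≥ 5`, the matroid `D_n` has a unique 2-element cocircuit `{x, y}` (its
unique series pair), and the contraction `D_n / {x, y}` is isomorphic to the uniform
matroid `U_{n-2, 2n-2}`. -/
theorem isD_series_pair (n : ℕ) (hn : 5 ≤ n) (M : Matroid α) (hM : IsD n M) :
    ∃ x y : α, x ≠ y ∧ _root_.IsCircuit M✶ {x, y} ∧
      (∀ C : Set α, _root_.IsCircuit M✶ C → C.encard = 2 → C = {x, y}) ∧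
      IsUnifIso (n - 2) (2 * n - 2) (MCon M {x, y}) := by
  obtain ⟨m, rfl⟩ : ∃ m, n = m + 5 := ⟨n - 5, by omega⟩
  rw [show m + 5 - 2 = m + 3 by omega, show 2 * (m + 5) - 2 = 2 * m + 8 by omega]
  obtain ⟨P, U, S, x, hP, hU, hS, hFE⟩ := hM
  rw [show m + 5 - 1 = m + 4 by omega] at hP
  obtain ⟨M₁, M₂, M₀, hU1, hU2, hDS0, hTr⟩ := hP
  rw [show m + 4 - 1 = m + 3 by omega] at hU1 hU2
  obtain ⟨y, hyE⟩ := Set.encard_eq_one.mp hU.1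
  have hd12 : Disjoint M₁.E M₂.E := hDS0.1
  have hE1 : M₁.E.encard = ((m + 4 : ℕ) : ℕ∞) := hU1.1
  have hE2 : M₂.E.encard = ((m + 4 : ℕ) : ℕ∞) := hU2.1
  have hPE : P.E = M₁.E ∪ M₂.E := hTr.2.1.trans hDS0.2.1
  have hyU : y ∈ U.E := by rw [hyE]; exact Set.mem_singleton y
  have hyP : y ∉ M₁.E ∪ M₂.E := by rw [← hPE]; exact Set.disjoint_right.mp hS.1 hyU
  have hSE : S.E = (M₁.E ∪ M₂.E) ∪ {y} := by rw [hS.2.1, hPE, hyE]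
  have hxS : x ∉ S.E := hFE.1
  have hxP : x ∉ M₁.E ∪ M₂.E := fun h => hxS (by rw [hSE]; exact Set.mem_union_left _ h)
  have hxy : x ≠ y := fun h => hxS (by rw [hSE, h]; exact Set.mem_union_right _ rfl)
  have hME : M.E = insert x S.E := hFE.2.1
  -- characterization of P-independence
  have hPindep : ∀ I : Set α, P.Indep I ↔ I ⊆ M₁.E ∪ M₂.E ∧
      (I ∩ M₁.E).encard ≤ ((m + 3 : ℕ) : ℕ∞) ∧ (I ∩ M₂.E).encard ≤ ((m + 3 : ℕ) : ℕ∞) ∧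
      I.encard ≤ ((m + 4 : ℕ) : ℕ∞) := by
    intro I
    rw [hTr.2.2, hDS0.2.2, hDS0.2.1]
    constructor
    · rintro ⟨⟨hIE, h1, h2⟩, hc⟩
      exact ⟨hIE, ((hU1.2 _).mp h1).2, ((hU2.2 _).mp h2).2, hc⟩
    · rintro ⟨hIE, h1, h2, hc⟩
      exact ⟨⟨hIE, (hU1.2 _).mpr ⟨inter_subset_right, h1⟩,
        (hU2.2 _).mpr ⟨inter_subset_right, h2⟩⟩, hc⟩
  have hUy : U.Indep {y} := (hU.2 _).mpr ⟨by rw [hyE], by simp⟩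
  -- characterization of S-independence
  have hSindep' : ∀ I : Set α, S.Indep I ↔ I ⊆ S.E ∧ P.Indep (I ∩ (M₁.E ∪ M₂.E)) := by
    intro I
    rw [hS.2.2]
    constructor
    · rintro ⟨hIE, h1, -⟩; rw [hPE] at h1; exact ⟨hIE, h1⟩
    · rintro ⟨hIE, h1⟩
      exact ⟨hIE, by rwa [hPE], hUy.subset (by rw [hyE]; exact inter_subset_right)⟩
  have hSbound : ∀ I, S.Indep I → I.encard ≤ ((m + 5 : ℕ) : ℕ∞) := by
    intro I hI
    obtain ⟨hIE, hPI⟩ := (hSindep' I).mp hI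
    have hIeq : I = (I ∩ (M₁.E ∪ M₂.E)) ∪ (I ∩ {y}) := by
      rw [← Set.inter_union_distrib_left, ← hSE]
      exact (Set.inter_eq_self_of_subset_left hIE).symm
    calc I.encard ≤ (I ∩ (M₁.E ∪ M₂.E)).encard + (I ∩ {y}).encard := by
          conv_lhs => rw [hIeq]
          exact Set.encard_union_le _ _
      _ ≤ ((m + 4 : ℕ) : ℕ∞) + 1 := by
          refine add_le_add ((hPindep _).mp hPI).2.2.2 ?_
          exact le_trans (Set.encard_le_encard inter_subset_right) (by simp)
      _ = ((m + 5 : ℕ) : ℕ∞) := by push_cast; ring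
  -- the key construction of large independent subsets of P avoiding a small set
  have core : ∀ A B : Set α, Disjoint A B → A.encard = ((m + 4 : ℕ) : ℕ∞) →
      B.encard = ((m + 4 : ℕ) : ℕ∞) →
      ∀ C : Set α, (C ∩ A).encard ≤ 2 → (C ∩ B).encard ≤ 1 →
      ∃ B' : Set α, B' ⊆ (A ∪ B) \ C ∧ B'.encard = ((m + 4 : ℕ) : ℕ∞) ∧
        (B' ∩ A).encard ≤ ((m + 3 : ℕ) : ℕ∞) ∧ (B' ∩ B).encard ≤ ((m + 3 : ℕ) : ℕ∞) := by
    intro A B hAB hA hB C hCA hCB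
    have hAd := Set.encard_diff_add_encard_inter A C
    rw [hA, Set.inter_comm] at hAd
    have hAC : (1 : ℕ∞) ≤ (A \ C).encard := by
      have h1 := enat_ge (k := m + 4) (j := 2) hAd (by exact_mod_cast hCA) (by omega)
      exact le_trans (by exact_mod_cast Nat.cast_le.mpr (show 1 ≤ m + 4 - 2 by omega)) h1
    have hBd := Set.encard_diff_add_encard_inter B C
    rw [hB, Set.inter_comm] at hBd
    have hBC : ((m + 3 : ℕ) : ℕ∞) ≤ (B \ C).encard := by
      have h1 := enat_ge (k := m + 4) (j := 1) hBd (by exact_mod_cast hCB) (by omega)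
      rwa [show m + 4 - 1 = m + 3 by omega] at h1
    obtain ⟨T₁, hT₁sub, hT₁⟩ := Set.exists_subset_encard_eq hAC
    obtain ⟨T₂, hT₂sub, hT₂⟩ := Set.exists_subset_encard_eq hBC
    have hT₁A : T₁ ⊆ A := hT₁sub.trans diff_subset
    have hT₂B : T₂ ⊆ B := hT₂sub.trans diff_subset
    have hT12 : Disjoint T₁ T₂ := hAB.mono hT₁A hT₂B
    refine ⟨T₁ ∪ T₂, Set.union_subset
      (hT₁sub.trans (Set.diff_subset_diff_left Set.subset_union_left))
      (hT₂sub.trans (Set.diff_subset_diff_left Set.subset_union_right)), ?_, ?_, ?_⟩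
    · rw [Set.encard_union_eq hT12, hT₁, hT₂]; push_cast; ring
    · have hint : (T₁ ∪ T₂) ∩ A = T₁ := by
        rw [Set.union_inter_distrib_right, Set.inter_eq_self_of_subset_left hT₁A,
          Set.disjoint_iff_inter_eq_empty.mp (hAB.symm.mono_left hT₂B), Set.union_empty]
      rw [hint, hT₁]
      exact le_trans (by norm_num) (Nat.cast_le.mpr (show 1 ≤ m + 3 by omega))
    · have hint : (T₁ ∪ T₂) ∩ B = T₂ := by
        rw [Set.union_inter_distrib_right, Set.inter_eq_self_of_subset_left hT₂B,
          Set.disjoint_iff_inter_eq_empty.mp (hAB.mono_left hT₁A), Set.empty_union]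
      rw [hint, hT₂]
  have key : ∀ C : Set α, (C ∩ (M₁.E ∪ M₂.E)).encard ≤ 2 →
      ∃ B', B' ⊆ (M₁.E ∪ M₂.E) \ C ∧ B'.encard = ((m + 4 : ℕ) : ℕ∞) ∧
        (B' ∩ M₁.E).encard ≤ ((m + 3 : ℕ) : ℕ∞) ∧ (B' ∩ M₂.E).encard ≤ ((m + 3 : ℕ) : ℕ∞) := by
    intro C hC
    have hsum : (C ∩ M₁.E).encard + (C ∩ M₂.E).encard ≤ 2 := by
      rw [encard_inter_union_eq C hd12]; exact hC
    by_cases h2 : (C ∩ M₂.E).encard ≤ 1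
    · exact core M₁.E M₂.E hd12 hE1 hE2 C (le_trans le_self_add hsum) h2
    · have hb : (2 : ℕ∞) ≤ (C ∩ M₂.E).encard := by
        rw [← one_add_one_eq_two]
        exact (ENat.add_one_le_iff (by simp)).mpr (not_le.mp h2)
      have ha : (C ∩ M₁.E).encard ≤ 1 := by
        have h0 : (C ∩ M₁.E).encard + 2 ≤ 0 + 2 := by
          rw [zero_add]
          calc (C ∩ M₁.E).encard + 2 ≤ (C ∩ M₁.E).encard + (C ∩ M₂.E).encard :=
                add_le_add_right hb _
            _ ≤ 2 := hsum
        exact le_trans ((ENat.add_le_add_iff_right (show (2 : ℕ∞) ≠ ⊤ by simp)).mp h0)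
          (by norm_num)
      obtain ⟨B', hs, hc, h2', h1'⟩ := core M₂.E M₁.E hd12.symm hE2 hE1 C
        (le_trans le_add_self hsum) ha
      rw [Set.union_comm] at hs
      exact ⟨B', hs, hc, h1', h2'⟩
  -- rank of S
  have hrank : _root_.eRank S = ((m + 5 : ℕ) : ℕ∞) := by
    obtain ⟨B', hB'sub, hB'card, h1, h2⟩ := key ∅ (by simp)
    rw [Set.diff_empty] at hB'sub
    have hyB' : y ∉ B' := fun h => hyP (hB'sub h)
    have hB'S : insert y B' ⊆ S.E := by
      rw [hSE]
      exact Set.insert_subset (Set.mem_union_right _ rfl)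
        (fun a ha => Set.mem_union_left _ (hB'sub ha))
    have hSi : S.Indep (insert y B') := by
      refine (hSindep' _).mpr ⟨hB'S, ?_⟩
      rw [Set.insert_inter_of_notMem hyP, Set.inter_eq_self_of_subset_left hB'sub]
      exact (hPindep B').mpr ⟨hB'sub, h1, h2, le_of_eq hB'card⟩
    refine le_antisymm (iSup_le ?_) ?_
    · rintro ⟨I, hI, -⟩; exact hSbound I hI
    · have hle : ((m + 5 : ℕ) : ℕ∞) ≤ (insert y B').encard := by
        rw [Set.encard_insert_of_notMem hyB', hB'card]
        exact le_of_eq (by push_cast; ring)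
      exact le_trans hle (le_iSup (fun I : {I : Set α // S.Indep I ∧ I ⊆ S.E} =>
        (I : Set α).encard) ⟨insert y B', hSi, hB'S⟩)
  have hMindep : ∀ I : Set α, M.Indep I ↔ ((x ∉ I ∧ S.Indep I) ∨
      (x ∈ I ∧ S.Indep (I \ {x}) ∧ (I \ {x}).encard + 1 ≤ ((m + 5 : ℕ) : ℕ∞))) := by
    intro I; rw [hFE.2.2, hrank]
  have upper : ∀ J, M.Indep J → J.encard ≤ ((m + 5 : ℕ) : ℕ∞) := by
    intro J hJ
    rcases (hMindep J).mp hJ with ⟨-, hJS⟩ | ⟨hxJ, -, hc⟩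
    · exact hSbound J hJS
    · rw [← Set.encard_diff_singleton_add_one hxJ]; exact hc
  have maximal_of_card : ∀ B, M.Indep B → B.encard = ((m + 5 : ℕ) : ℕ∞) → M.IsBase B := by
    intro B hB hc
    refine hB.isBase_of_maximal ?_
    intro J hJ hsub
    exact (Set.finite_of_encard_le_coe (upper J hJ)).eq_of_subset_of_encard_le' hsub
      ((upper J hJ).trans_eq hc.symm)
  -- base constructions
  have mkBase : ∀ z B', (z = x ∨ z = y) → B' ⊆ M₁.E ∪ M₂.E →
      (B' ∩ M₁.E).encard ≤ ((m + 3 : ℕ) : ℕ∞) → (B' ∩ M₂.E).encard ≤ ((m + 3 : ℕ) : ℕ∞) →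
      B'.encard = ((m + 4 : ℕ) : ℕ∞) → M.IsBase (insert z B') := by
    intro z B' hz hsub h1 h2 hcard
    have hzP : z ∉ M₁.E ∪ M₂.E := by rcases hz with rfl | rfl; exacts [hxP, hyP]
    have hzB' : z ∉ B' := fun h => hzP (hsub h)
    have hPB' : P.Indep B' := (hPindep B').mpr ⟨hsub, h1, h2, le_of_eq hcard⟩
    have hB'S : B' ⊆ S.E := fun a ha => by rw [hSE]; exact Set.mem_union_left _ (hsub ha)
    have hSB' : S.Indep B' := (hSindep' B').mpr
      ⟨hB'S, by rwa [Set.inter_eq_self_of_subset_left hsub]⟩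
    have hind : M.Indep (insert z B') := by
      rcases hz with rfl | rfl
      · refine (hMindep _).mpr (Or.inr ⟨Set.mem_insert _ _, ?_, ?_⟩)
        · rwa [Set.insert_diff_self_of_notMem hzB']
        · rw [Set.insert_diff_self_of_notMem hzB', hcard]
          rw [show ((m + 4 : ℕ) : ℕ∞) + 1 = ((m + 5 : ℕ) : ℕ∞) by push_cast; ring]
      · refine (hMindep _).mpr (Or.inl ⟨?_, ?_⟩)
        · intro h
          rcases Set.mem_insert_iff.mp h with h' | h'
          exacts [hxy h', hxP (hsub h')]
        · refine (hSindep' _).mpr ⟨Set.insert_subset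
            (by rw [hSE]; exact Set.mem_union_right _ rfl) hB'S, ?_⟩
          rw [Set.insert_inter_of_notMem hyP, Set.inter_eq_self_of_subset_left hsub]
          exact hPB'
    refine maximal_of_card _ hind ?_
    rw [Set.encard_insert_of_notMem hzB', hcard]; push_cast; ring
  have mkBase2 : ∀ T : Set α, T ⊆ M₁.E ∪ M₂.E → T.encard = ((m + 3 : ℕ) : ℕ∞) →
      M.IsBase (insert x (insert y T)) := by
    intro T hsub hcard
    have hyT : y ∉ T := fun h => hyP (hsub h)
    have hxT : x ∉ insert y T := by
      intro h
      rcases Set.mem_insert_iff.mp h with h' | h'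
      exacts [hxy h', hxP (hsub h')]
    have hPT : P.Indep T := (hPindep T).mpr
      ⟨hsub, le_trans (Set.encard_le_encard inter_subset_left) hcard.le,
        le_trans (Set.encard_le_encard inter_subset_left) hcard.le,
        hcard.le.trans (Nat.cast_le.mpr (by omega))⟩
    have hSyT : S.Indep (insert y T) := by
      refine (hSindep' _).mpr ⟨?_, ?_⟩
      · rw [hSE]
        exact Set.insert_subset (Set.mem_union_right _ rfl)
          (fun a ha => Set.mem_union_left _ (hsub ha))
      · rw [Set.insert_inter_of_notMem hyP, Set.inter_eq_self_of_subset_left hsub]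
        exact hPT
    have hind : M.Indep (insert x (insert y T)) := by
      refine (hMindep _).mpr (Or.inr ⟨Set.mem_insert _ _, ?_, ?_⟩)
      · rwa [Set.insert_diff_self_of_notMem hxT]
      · rw [Set.insert_diff_self_of_notMem hxT, Set.encard_insert_of_notMem hyT, hcard]
        rw [show ((m + 3 : ℕ) : ℕ∞) + 1 + 1 = ((m + 5 : ℕ) : ℕ∞) by push_cast; ring]
    refine maximal_of_card _ hind ?_
    rw [Set.encard_insert_of_notMem hxT, Set.encard_insert_of_notMem hyT, hcard]
    push_cast; ring
  -- a fixed base and the size of every base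
  obtain ⟨B'₀, hB'₀sub, hB'₀card, hB'₀1, hB'₀2⟩ := key ∅ (by simp)
  rw [Set.diff_empty] at hB'₀sub
  have hxB'₀ : x ∉ B'₀ := fun h => hxP (hB'₀sub h)
  have hyB'₀ : y ∉ B'₀ := fun h => hyP (hB'₀sub h)
  have hbasex : M.IsBase (insert x B'₀) := mkBase x B'₀ (Or.inl rfl) hB'₀sub hB'₀1 hB'₀2 hB'₀card
  have hbasey : M.IsBase (insert y B'₀) := mkBase y B'₀ (Or.inr rfl) hB'₀sub hB'₀1 hB'₀2 hB'₀card
  have base_size : ∀ B, M.IsBase B → B.encard = ((m + 5 : ℕ) : ℕ∞) := by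
    intro B hB
    rw [hB.encard_eq_encard_of_isBase hbasex, Set.encard_insert_of_notMem hxB'₀, hB'₀card]
    push_cast; ring
  have hpairE : ({x, y} : Set α) ⊆ M.E := by
    rw [hME]
    rintro a ha
    rcases Set.mem_insert_iff.mp ha with rfl | ha'
    · exact Set.mem_insert _ _
    · rw [Set.mem_singleton_iff] at ha'
      subst ha'
      exact Set.mem_insert_of_mem _ (by rw [hSE]; exact Set.mem_union_right _ rfl)
  -- {x, y} is a cocircuit
  have hnotIndep : ¬ M✶.Indep {x, y} := by
    intro h
    rw [dual_indep_iff_exists'] at h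
    obtain ⟨-, B, hB, hdisj⟩ := h
    have hxB : x ∉ B := fun hh => Set.disjoint_left.mp hdisj (Set.mem_insert _ _) hh
    have hyB : y ∉ B := fun hh =>
      Set.disjoint_left.mp hdisj (Set.mem_insert_of_mem _ rfl) hh
    have hBS : S.Indep B := by
      rcases (hMindep B).mp hB.indep with ⟨-, h'⟩ | ⟨hxB', -, -⟩
      exacts [h', absurd hxB' hxB]
    have hBsub : B ⊆ M₁.E ∪ M₂.E := by
      intro a ha
      have h' := ((hSindep' B).mp hBS).1 ha
      rw [hSE] at h'
      rcases h' with h' | h'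
      · exact h'
      · rw [Set.mem_singleton_iff] at h'; exact absurd (h' ▸ ha) hyB
    have hPB : P.Indep B := by
      have h' := ((hSindep' B).mp hBS).2
      rwa [Set.inter_eq_self_of_subset_left hBsub] at h'
    have hBcard : B.encard ≤ ((m + 4 : ℕ) : ℕ∞) := ((hPindep B).mp hPB).2.2.2
    have hind : M.Indep (insert x B) := by
      refine (hMindep _).mpr (Or.inr ⟨Set.mem_insert _ _, ?_, ?_⟩)
      · rwa [Set.insert_diff_self_of_notMem hxB]
      · rw [Set.insert_diff_self_of_notMem hxB]
        calc B.encard + 1 ≤ ((m + 4 : ℕ) : ℕ∞) + 1 := add_le_add_left hBcard 1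
          _ = ((m + 5 : ℕ) : ℕ∞) := by push_cast; ring
    have heq := hB.eq_of_subset_indep hind (Set.subset_insert _ _)
    exact hxB (by rw [heq]; exact Set.mem_insert _ _)
  have hdx : M✶.Indep {x} := by
    rw [dual_indep_iff_exists']
    refine ⟨Set.singleton_subset_iff.mpr (hpairE (Set.mem_insert _ _)),
      insert y B'₀, hbasey, ?_⟩
    rw [Set.disjoint_left]
    rintro a rfl h
    rcases Set.mem_insert_iff.mp h with h' | h'
    exacts [hxy h', hxB'₀ h']
  have hdy : M✶.Indep {y} := by
    rw [dual_indep_iff_exists']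
    refine ⟨Set.singleton_subset_iff.mpr (hpairE (Set.mem_insert_of_mem _ rfl)),
      insert x B'₀, hbasex, ?_⟩
    rw [Set.disjoint_left]
    rintro a rfl h
    rcases Set.mem_insert_iff.mp h with h' | h'
    exacts [hxy h'.symm, hyB'₀ h']
  have hCircuit : _root_.IsCircuit M✶ {x, y} := by
    refine ⟨⟨hnotIndep, by rw [dual_ground]; exact hpairE⟩, ?_⟩
    intro D hD
    by_cases hxD : x ∈ D
    · have hyD : y ∉ D := by
        intro hyD
        refine hD.ne (Set.Subset.antisymm hD.subset ?_)
        rintro a ha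
        rcases Set.mem_insert_iff.mp ha with rfl | ha'
        · exact hxD
        · rw [Set.mem_singleton_iff] at ha'; exact ha' ▸ hyD
      refine hdx.subset ?_
      intro a ha
      rcases Set.mem_insert_iff.mp (hD.subset ha) with rfl | ha'
      · exact rfl
      · rw [Set.mem_singleton_iff] at ha'; exact absurd (ha' ▸ ha) hyD
    · refine hdy.subset ?_
      intro a ha
      rcases Set.mem_insert_iff.mp (hD.subset ha) with rfl | ha'
      · exact absurd ha hxD
      · exact ha'
  -- uniqueness of the 2-cocircuit
  have huniq : ∀ C : Set α, _root_.IsCircuit M✶ C → C.encard = 2 → C = {x, y} := by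
    intro C hC hC2
    by_contra hne
    obtain ⟨hdep, -⟩ := hC
    rw [dep_iff] at hdep
    obtain ⟨hnind, hCE⟩ := hdep
    apply hnind
    rw [dual_indep_iff_exists']
    refine ⟨hCE, ?_⟩
    have hCP : (C ∩ (M₁.E ∪ M₂.E)).encard ≤ 2 :=
      le_trans (Set.encard_le_encard inter_subset_left) hC2.le
    obtain ⟨B', hs, hc, h1, h2⟩ := key C hCP
    by_cases hxC : x ∈ C
    · have hyC : y ∉ C := by
        intro hyC
        refine hne ((Set.finite_of_encard_le_coe
          (show C.encard ≤ ((2 : ℕ) : ℕ∞) by exact_mod_cast hC2.le)).eq_of_subset_of_encard_le'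
          ?_ ?_).symm
        · rintro a ha
          rcases Set.mem_insert_iff.mp ha with rfl | ha'
          · exact hxC
          · rw [Set.mem_singleton_iff] at ha'; exact ha' ▸ hyC
        · rw [hC2, Set.encard_pair hxy]
      refine ⟨insert y B', mkBase y B' (Or.inr rfl) (hs.trans diff_subset) h1 h2 hc, ?_⟩
      rw [Set.disjoint_left]
      intro a haC h
      rcases Set.mem_insert_iff.mp h with rfl | h'
      exacts [hyC haC, (hs h').2 haC]
    · refine ⟨insert x B', mkBase x B' (Or.inl rfl) (hs.trans diff_subset) h1 h2 hc, ?_⟩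
      rw [Set.disjoint_left]
      intro a haC h
      rcases Set.mem_insert_iff.mp h with rfl | h'
      exacts [hxC haC, (hs h').2 haC]
  -- the contraction
  have hXE : M.E \ {x, y} = M₁.E ∪ M₂.E := by
    rw [hME, hSE]
    ext a
    simp only [Set.mem_diff, Set.mem_insert_iff, Set.mem_union, Set.mem_singleton_iff]
    constructor
    · rintro ⟨(rfl | (h | rfl)), hne⟩
      · exact absurd (Or.inl rfl) hne
      · exact h
      · exact absurd (Or.inr rfl) hne
    · intro h
      exact ⟨Or.inr (Or.inl h), by rintro (rfl | rfl); exacts [hxP h, hyP h]⟩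
  have hXsub : M₁.E ∪ M₂.E ⊆ M.E := by rw [← hXE]; exact Set.diff_subset
  have hXcard : (M₁.E ∪ M₂.E).encard = ((2 * m + 8 : ℕ) : ℕ∞) := by
    rw [Set.encard_union_eq hd12, hE1, hE2]; push_cast; ring
  have hMEcard : M.E.encard = ((2 * m + 10 : ℕ) : ℕ∞) := by
    rw [hME, Set.encard_insert_of_notMem hxS, hSE,
      Set.encard_union_eq (Set.disjoint_singleton_right.mpr hyP), hXcard, Set.encard_singleton]
    push_cast; ring
  have Rindep : ∀ J, (M✶ ↾ (M₁.E ∪ M₂.E)).Indep J ↔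
      J ⊆ M₁.E ∪ M₂.E ∧ J.encard ≤ ((m + 5 : ℕ) : ℕ∞) := by
    intro J
    rw [restrict_indep_iff, dual_indep_iff_exists']
    constructor
    · rintro ⟨⟨hJE, B, hB, hdisj⟩, hJX⟩
      refine ⟨hJX, ?_⟩
      have hJsub : J ⊆ M.E \ B := fun a ha => ⟨hJE ha, Set.disjoint_left.mp hdisj ha⟩
      have h2 : (M.E \ B).encard = ((m + 5 : ℕ) : ℕ∞) := by
        have := encard_cancel (show m + 5 ≤ 2 * m + 10 by omega) hB.subset_ground hMEcard
          (base_size B hB)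
        rwa [show 2 * m + 10 - (m + 5) = m + 5 by omega] at this
      exact h2 ▸ Set.encard_le_encard hJsub
    · rintro ⟨hJX, hJcard⟩
      refine ⟨⟨hJX.trans hXsub, ?_⟩, hJX⟩
      have h1 := Set.encard_diff_add_encard_inter (M₁.E ∪ M₂.E) J
      rw [Set.inter_eq_self_of_subset_right hJX, hXcard] at h1
      have h2 : ((m + 3 : ℕ) : ℕ∞) ≤ ((M₁.E ∪ M₂.E) \ J).encard := by
        have := enat_ge h1 hJcard (by omega)
        rwa [show 2 * m + 8 - (m + 5) = m + 3 by omega] at this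
      obtain ⟨T, hTsub, hTcard⟩ := Set.exists_subset_encard_eq h2
      refine ⟨insert x (insert y T), mkBase2 T (hTsub.trans diff_subset) hTcard, ?_⟩
      rw [Set.disjoint_left]
      intro a haJ h
      have haX : a ∈ M₁.E ∪ M₂.E := hJX haJ
      rcases Set.mem_insert_iff.mp h with rfl | h'
      · exact hxP haX
      rcases Set.mem_insert_iff.mp h' with rfl | h''
      · exact hyP haX
      · exact (hTsub h'').2 haJ
  have Rbase : ∀ B, (M✶ ↾ (M₁.E ∪ M₂.E)).IsBase B ↔
      B ⊆ M₁.E ∪ M₂.E ∧ B.encard = ((m + 5 : ℕ) : ℕ∞) := by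
    intro B
    constructor
    · intro hB
      obtain ⟨hBX, hBcard⟩ := (Rindep B).mp hB.indep
      refine ⟨hBX, ?_⟩
      by_contra hne'
      have hlt : B.encard < ((m + 5 : ℕ) : ℕ∞) := lt_of_le_of_ne hBcard hne'
      have h1 := Set.encard_diff_add_encard_inter (M₁.E ∪ M₂.E) B
      rw [Set.inter_eq_self_of_subset_right hBX, hXcard] at h1
      have hne0 : ((M₁.E ∪ M₂.E) \ B).encard ≠ 0 := by
        intro h0
        rw [h0, zero_add] at h1
        rw [h1] at hlt
        exact absurd (Nat.cast_lt.mp hlt) (by omega)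
      obtain ⟨e, he⟩ := Set.encard_ne_zero.mp hne0
      have hins : (M✶ ↾ (M₁.E ∪ M₂.E)).Indep (insert e B) := by
        refine (Rindep _).mpr ⟨Set.insert_subset he.1 hBX, ?_⟩
        exact le_trans (Set.encard_insert_le _ _)
          ((ENat.add_one_le_iff (ne_top_of_lt hlt)).mpr hlt)
      have heq := hB.eq_of_subset_indep hins (Set.subset_insert _ _)
      exact he.2 (by rw [heq]; exact Set.mem_insert _ _)
    · rintro ⟨hBX, hBcard⟩
      refine ((Rindep B).mpr ⟨hBX, hBcard.le⟩).isBase_of_maximal ?_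
      intro J hJ hBJ
      obtain ⟨hJX, hJcard⟩ := (Rindep J).mp hJ
      exact (Set.finite_of_encard_le_coe hJcard).eq_of_subset_of_encard_le' hBJ
        (hJcard.trans_eq hBcard.symm)
  refine ⟨x, y, hxy, hCircuit, huniq, ?_⟩
  show IsUnifIso (m + 3) (2 * m + 8) ((M✶ ↾ (M.E \ {x, y}))✶)
  rw [hXE]
  constructor
  · rw [dual_ground, restrict_ground_eq]
    exact hXcard
  · intro I
    rw [dual_indep_iff_exists']
    simp only [dual_ground, restrict_ground_eq]
    constructor
    · rintro ⟨hIE, B, hB, hdisj⟩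
      refine ⟨hIE, ?_⟩
      obtain ⟨hBX, hBcard⟩ := (Rbase B).mp hB
      have hIsub : I ⊆ (M₁.E ∪ M₂.E) \ B := fun a ha =>
        ⟨hIE ha, Set.disjoint_left.mp hdisj ha⟩
      have h2 : ((M₁.E ∪ M₂.E) \ B).encard = ((m + 3 : ℕ) : ℕ∞) := by
        have := encard_cancel (show m + 5 ≤ 2 * m + 8 by omega) hBX hXcard hBcard
        rwa [show 2 * m + 8 - (m + 5) = m + 3 by omega] at this
      exact h2 ▸ Set.encard_le_encard hIsub
    · rintro ⟨hIX, hIcard⟩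
      refine ⟨hIX, ?_⟩
      have h1 := Set.encard_diff_add_encard_inter (M₁.E ∪ M₂.E) I
      rw [Set.inter_eq_self_of_subset_right hIX, hXcard] at h1
      have h2 : ((m + 5 : ℕ) : ℕ∞) ≤ ((M₁.E ∪ M₂.E) \ I).encard := by
        have := enat_ge h1 hIcard (by omega)
        rwa [show 2 * m + 8 - (m + 3) = m + 5 by omega] at this
      obtain ⟨B, hBsub, hBcard⟩ := Set.exists_subset_encard_eq h2
      exact ⟨B, (Rbase B).mpr ⟨hBsub.trans diff_subset, hBcard⟩,
        Set.disjoint_left.mpr fun a ha hb => (hBsub hb).2 ha⟩
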